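/- Let γ > 0, λ ∈ ℂ, ℓ ∈ ℕ, and let F : ℂ → ℂ be the regular solution: an entire function with z²F''(z) + 2zF'(z) − ℓ(ℓ+1)F(z) + 2γzF(z) + λz²F(z) = 0 for all z, F^(j)(0) = 0 for j < ℓ, and F^(ℓ)(0) = ℓ!. If ψ : (0,∞) → ℂ is a twice continuously differentiable solution of the radial Schrödinger equation on (0,∞) that is bounded on (0,1), then there exists c ∈ ℂ such that ψ(r) = c·F(r) for all r > 0; that is, the bounded-near-zero solutions are exactly the scalar multiples of the regular solution. -/

import Mathlib

noncomputable section

private lemma ode_unique (γ : ℝ) (hγ : 0 < γ) (lam : ℂ) (ℓ : ℕ) (f g f1 g1 f2 g2 : ℝ → ℂ)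
    (hf1 : ∀ r : ℝ, 0 < r → HasDerivAt f (f1 r) r)
    (hf2 : ∀ r : ℝ, 0 < r → HasDerivAt f1 (f2 r) r)
    (hfe : ∀ r : ℝ, 0 < r → (r : ℂ) ^ 2 * f2 r + 2 * (r : ℂ) * f1 r
        - ((ℓ * (ℓ + 1) : ℕ) : ℂ) * f r + 2 * (γ : ℂ) * (r : ℂ) * f r
        + lam * (r : ℂ) ^ 2 * f r = 0)
    (hg1 : ∀ r : ℝ, 0 < r → HasDerivAt g (g1 r) r)
    (hg2 : ∀ r : ℝ, 0 < r → HasDerivAt g1 (g2 r) r)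
    (hge : ∀ r : ℝ, 0 < r → (r : ℂ) ^ 2 * g2 r + 2 * (r : ℂ) * g1 r
        - ((ℓ * (ℓ + 1) : ℕ) : ℂ) * g r + 2 * (γ : ℂ) * (r : ℂ) * g r
        + lam * (r : ℂ) ^ 2 * g r = 0)
    (r₀ : ℝ) (hr₀ : 0 < r₀) (h0 : f r₀ = g r₀) (h1 : f1 r₀ = g1 r₀) :
    ∀ r : ℝ, 0 < r → f r = g r := by
  intro r hr
  set a : ℝ := min r r₀ / 2 with ha_def
  set b : ℝ := max r r₀ + 1 with hb_def
  have ha : 0 < a := by positivity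
  have hableq : a < b := by
    have h1 : min r r₀ ≤ max r r₀ := (min_le_left _ _).trans (le_max_left _ _)
    simp only [ha_def, hb_def]; linarith
  have hab : ∀ t ∈ Set.Ioo a b, (0:ℝ) < t := fun t ht => ha.trans ht.1
  set τ : ℝ → ℝ := fun t => max a (min t b) with hτ_def
  have hτ1 : ∀ t, a ≤ τ t := fun t => le_max_left _ _
  have hτ2 : ∀ t, τ t ≤ b := fun t => max_le hableq.le (min_le_right _ _)
  have hτpos : ∀ t, 0 < τ t := fun t => ha.trans_le (hτ1 t)
  have hτeq : ∀ t ∈ Set.Ioo a b, τ t = t := by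
    intro t ht
    simp only [hτ_def]
    rw [min_eq_left ht.2.le, max_eq_right ht.1.le]
  set α : ℝ → ℂ := fun t =>
    (((ℓ * (ℓ + 1) : ℕ) : ℂ) - 2 * (γ:ℂ) * (τ t : ℂ) - lam * (τ t : ℂ) ^ 2) / (τ t : ℂ) ^ 2
    with hα_def
  set β : ℝ → ℂ := fun t => -2 / (τ t : ℂ) with hβ_def
  set A : ℝ := (((ℓ * (ℓ + 1) : ℕ) : ℝ) + 2 * γ * b + ‖lam‖ * b ^ 2) / a ^ 2 with hA_def
  set B : ℝ := 2 / a with hB_def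
  have hbpos : 0 < b := ha.trans hableq
  have hA0 : 0 ≤ A := by positivity
  have hB0 : 0 ≤ B := by positivity
  have hτne : ∀ t, ((τ t : ℝ) : ℂ) ≠ 0 := fun t => by
    exact_mod_cast (hτpos t).ne'
  have hA : ∀ t, ‖α t‖ ≤ A := by
    intro t
    have h1 : ‖(((ℓ * (ℓ + 1) : ℕ) : ℂ) - 2 * (γ:ℂ) * (τ t : ℂ) - lam * (τ t : ℂ) ^ 2)‖
        ≤ ((ℓ * (ℓ + 1) : ℕ) : ℝ) + 2 * γ * b + ‖lam‖ * b ^ 2 := by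
      refine (norm_sub_le _ _).trans ?_
      have h2 : ‖(((ℓ * (ℓ + 1) : ℕ) : ℂ) - 2 * (γ:ℂ) * (τ t : ℂ))‖
          ≤ ((ℓ * (ℓ + 1) : ℕ) : ℝ) + 2 * γ * b := by
        refine (norm_sub_le _ _).trans ?_
        have e1 : ‖((ℓ * (ℓ + 1) : ℕ) : ℂ)‖ = ((ℓ * (ℓ + 1) : ℕ) : ℝ) :=
          Complex.norm_natCast _
        have e2 : ‖2 * (γ:ℂ) * (τ t : ℂ)‖ = 2 * γ * τ t := by
          simp [norm_mul, abs_of_pos hγ, abs_of_pos (hτpos t)]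
        rw [e1, e2]
        have := hτ2 t
        nlinarith [hγ.le]
      have e3 : ‖lam * (τ t : ℂ) ^ 2‖ = ‖lam‖ * (τ t) ^ 2 := by
        rw [norm_mul, norm_pow, Complex.norm_real, Real.norm_eq_abs, sq_abs]
      rw [e3]
      have h4 : ‖lam‖ * (τ t) ^ 2 ≤ ‖lam‖ * b ^ 2 :=
        mul_le_mul_of_nonneg_left (by nlinarith [hτ2 t, (hτpos t).le]) (norm_nonneg lam)
      linarith
    have h5 : ‖((τ t : ℝ) : ℂ) ^ 2‖ = (τ t) ^ 2 := by
      rw [norm_pow, Complex.norm_real, Real.norm_eq_abs, sq_abs]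
    rw [hα_def]
    simp only
    rw [norm_div, h5]
    exact div_le_div₀ (by positivity) h1 (by positivity) (by nlinarith [hτ1 t, ha])
  have hB : ∀ t, ‖β t‖ ≤ B := by
    intro t
    rw [hβ_def]
    simp only [norm_div, norm_neg]
    rw [Complex.norm_real, Real.norm_eq_abs, abs_of_pos (hτpos t)]
    have : ‖(2:ℂ)‖ = 2 := by norm_num
    rw [this, hB_def]
    exact div_le_div₀ (by norm_num) le_rfl ha (hτ1 t)
  set K : NNReal := Real.toNNReal (1 + A + B) with hK_def
  have hK : (K : ℝ) = 1 + A + B := Real.coe_toNNReal _ (by linarith)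
  set v : ℝ → ℂ × ℂ → ℂ × ℂ := fun t p => (p.2, α t * p.1 + β t * p.2) with hv_def
  have hv : ∀ t, LipschitzWith K (v t) := by
    intro t
    refine LipschitzWith.of_dist_le_mul fun x y => ?_
    rw [Prod.dist_eq]
    have hd0 : (0:ℝ) ≤ dist x y := dist_nonneg
    refine max_le ?_ ?_
    · calc dist (v t x).1 (v t y).1 = dist x.2 y.2 := rfl
        _ ≤ dist x y := by rw [Prod.dist_eq]; exact le_max_right _ _
        _ ≤ K * dist x y := by nlinarith [hK, hA0, hB0]
    · have e : (v t x).2 - (v t y).2 = α t * (x.1 - y.1) + β t * (x.2 - y.2) := by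
        simp only [hv_def]; ring
      rw [dist_eq_norm, e]
      calc ‖α t * (x.1 - y.1) + β t * (x.2 - y.2)‖
          ≤ ‖α t‖ * ‖x.1 - y.1‖ + ‖β t‖ * ‖x.2 - y.2‖ := by
            refine (norm_add_le _ _).trans ?_
            rw [norm_mul, norm_mul]
        _ ≤ A * dist x y + B * dist x y := by
            have d1 : ‖x.1 - y.1‖ ≤ dist x y := by
              rw [← dist_eq_norm, Prod.dist_eq]; exact le_max_left _ _
            have d2 : ‖x.2 - y.2‖ ≤ dist x y := by
              rw [← dist_eq_norm, Prod.dist_eq]; exact le_max_right _ _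
            have := hA t; have := hB t
            have n1 : (0:ℝ) ≤ ‖α t‖ := norm_nonneg _
            have n2 : (0:ℝ) ≤ ‖β t‖ := norm_nonneg _
            nlinarith
        _ ≤ K * dist x y := by nlinarith [hK]
  have hr₀mem : r₀ ∈ Set.Ioo a b := by
    constructor
    · have : min r r₀ ≤ r₀ := min_le_right _ _
      simp only [ha_def]; linarith [lt_min hr hr₀]
    · have : r₀ ≤ max r r₀ := le_max_right _ _
      simp only [hb_def]; linarith
  have hrmem : r ∈ Set.Ioo a b := by
    constructor
    · have : min r r₀ ≤ r := min_le_left _ _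
      simp only [ha_def]; linarith [lt_min hr hr₀]
    · have : r ≤ max r r₀ := le_max_left _ _
      simp only [hb_def]; linarith
  have key : ∀ (u u1 u2 : ℝ → ℂ),
      (∀ s : ℝ, 0 < s → HasDerivAt u (u1 s) s) →
      (∀ s : ℝ, 0 < s → HasDerivAt u1 (u2 s) s) →
      (∀ s : ℝ, 0 < s → (s : ℂ) ^ 2 * u2 s + 2 * (s : ℂ) * u1 s
        - ((ℓ * (ℓ + 1) : ℕ) : ℂ) * u s + 2 * (γ : ℂ) * (s : ℂ) * u s
        + lam * (s : ℂ) ^ 2 * u s = 0) →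
      ∀ t ∈ Set.Ioo a b,
        HasDerivAt (fun s => (u s, u1 s)) (v t ((u t, u1 t))) t ∧ (u t, u1 t) ∈ Set.univ := by
    intro u u1 u2 hu1 hu2 hue t ht
    refine ⟨?_, Set.mem_univ _⟩
    have ht0 : 0 < t := hab t ht
    have htne : (t : ℂ) ≠ 0 := by exact_mod_cast ht0.ne'
    have hvt : v t ((u t, u1 t)) = (u1 t, u2 t) := by
      simp only [hv_def, Prod.mk.injEq]
      refine ⟨trivial, ?_⟩
      simp only [hα_def, hβ_def, hτeq t ht]
      have hue' := hue t ht0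
      push_cast at hue' ⊢
      field_simp
      linear_combination -hue'
    rw [hvt]
    exact (hu1 t ht0).prodMk (hu2 t ht0)
  have main := ODE_solution_unique_of_mem_Ioo (v := v) (s := fun _ => Set.univ) (K := K)
    (fun t _ => (hv t).lipschitzOnWith) hr₀mem
    (key f f1 f2 hf1 hf2 hfe) (key g g1 g2 hg1 hg2 hge)
    (by rw [h0, h1])
  have := main hrmem
  exact congrArg Prod.fst this

private lemma iteratedDeriv_zero_fun (n : ℕ) (z : ℂ) :
    iteratedDeriv n (fun _ : ℂ => (0:ℂ)) z = 0 := by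
  induction n generalizing z with
  | zero => simp
  | succ n ih =>
    rw [iteratedDeriv_succ']
    simp only [deriv_const']
    exact ih z

set_option maxHeartbeats 1000000 in
/-- A solution of the radial Schrödinger equation on `(0,∞)` that is bounded near zero is a
scalar multiple of the regular solution `F_{ℓ,λ}`. -/
theorem bounded_solution_is_multiple_of_regular (γ : ℝ) (hγ : 0 < γ) (lam : ℂ) (ℓ : ℕ)
    (F : ℂ → ℂ) (hF : Differentiable ℂ F)
    (hFeq : ∀ z : ℂ, z ^ 2 * deriv (deriv F) z + 2 * z * deriv F z
        - ((ℓ * (ℓ + 1) : ℕ) : ℂ) * F z + 2 * (γ : ℂ) * z * F z + lam * z ^ 2 * F z = 0)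
    (hFj : ∀ j : ℕ, j < ℓ → iteratedDeriv j F 0 = 0)
    (hFl : iteratedDeriv ℓ F 0 = (Nat.factorial ℓ : ℂ))
    (ψ ψ' ψ'' : ℝ → ℂ)
    (hψ1 : ∀ r : ℝ, 0 < r → HasDerivAt ψ (ψ' r) r)
    (hψ2 : ∀ r : ℝ, 0 < r → HasDerivAt ψ' (ψ'' r) r)
    (hψc : ContinuousOn ψ'' (Set.Ioi 0))
    (hψeq : ∀ r : ℝ, 0 < r → (r : ℂ) ^ 2 * ψ'' r + 2 * (r : ℂ) * ψ' r
        - ((ℓ * (ℓ + 1) : ℕ) : ℂ) * ψ r + 2 * (γ : ℂ) * (r : ℂ) * ψ r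
        + lam * (r : ℂ) ^ 2 * ψ r = 0)
    (hbd : ∃ M : ℝ, ∀ r : ℝ, 0 < r → r < 1 → ‖ψ r‖ ≤ M) :
    ∃ c : ℂ, ∀ r : ℝ, 0 < r → ψ r = c * F (r : ℂ) := by
  classical
  obtain ⟨M0, hM0⟩ := hbd
  set M : ℝ := max M0 0 with hM_def
  have hM : ∀ r : ℝ, 0 < r → r < 1 → ‖ψ r‖ ≤ M :=
    fun r h1 h2 => (hM0 r h1 h2).trans (le_max_left _ _)
  have hMpos : 0 ≤ M := le_max_right _ _
  have hFa : AnalyticOnNhd ℂ F Set.univ := Complex.analyticOnNhd_univ_iff_differentiable.mpr hF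
  have hFd : Differentiable ℂ (deriv F) := by
    intro z
    exact (hFa.deriv z (Set.mem_univ z)).differentiableAt
  have hFr : ∀ r : ℝ, HasDerivAt (fun s : ℝ => F s) (deriv F r) r := fun r =>
    (hF.differentiableAt.hasDerivAt).comp_ofReal
  have hFr' : ∀ r : ℝ, HasDerivAt (fun s : ℝ => deriv F s) (deriv (deriv F) r) r := fun r =>
    (hFd.differentiableAt.hasDerivAt).comp_ofReal
  have hsq : ∀ r : ℝ, HasDerivAt (fun s : ℝ => ((s:ℂ))^2) (2*(r:ℂ)) r := by
    intro r
    have h : HasDerivAt (fun z : ℂ => z^2) (2*(r:ℂ)) (r:ℂ) := by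
      simpa using hasDerivAt_pow 2 (r:ℂ)
    exact h.comp_ofReal
  -- Wronskian
  set W : ℝ → ℂ := fun r => (r:ℂ)^2 * (ψ r * deriv F r - ψ' r * F r) with hW_def
  have hWd : ∀ r : ℝ, 0 < r → HasDerivAt W 0 r := by
    intro r hr
    have h2 : HasDerivAt (fun s : ℝ => ψ s * deriv F s - ψ' s * F s)
        (ψ' r * deriv F r + ψ r * deriv (deriv F) r - (ψ'' r * F r + ψ' r * deriv F r)) r :=
      ((hψ1 r hr).mul (hFr' r)).sub ((hψ2 r hr).mul (hFr r))
    have h3 := (hsq r).mul h2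
    convert h3 using 1
    · rfl
    · rfl
    have h := hψeq r hr
    have hFe := hFeq (r:ℂ)
    linear_combination (F (r:ℂ)) * h - (ψ r) * hFe
  have hWc : ∀ r s : ℝ, 0 < s → s ≤ r → W r = W s := by
    intro r s hs hsr
    have hcont : ContinuousOn W (Set.Icc s r) := fun x hx =>
      ((hWd x (hs.trans_le hx.1)).continuousAt).continuousWithinAt
    exact constant_of_has_deriv_right_zero hcont
      (fun x hx => (hWd x (hs.trans_le hx.1)).hasDerivWithinAt) r
      (Set.right_mem_Icc.mpr hsr)
  -- u = r^2 ψ'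
  set u : ℝ → ℂ := fun r => (r:ℂ)^2 * ψ' r with hu_def
  set q : ℝ → ℂ := fun r => ((ℓ*(ℓ+1):ℕ):ℂ) - 2*(γ:ℂ)*(r:ℂ) - lam*(r:ℂ)^2 with hq_def
  set C : ℝ := ((ℓ*(ℓ+1):ℕ):ℝ) + 2*γ + ‖lam‖ with hC_def
  have hC0 : 0 ≤ C := by positivity
  have hud : ∀ r : ℝ, 0 < r → HasDerivAt u (q r * ψ r) r := by
    intro r hr
    have h3 := (hsq r).mul (hψ2 r hr)
    convert h3 using 1
    · rfl
    · rfl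
    simp only [hq_def]
    linear_combination -(hψeq r hr)
  have hqb : ∀ r : ℝ, 0 < r → r < 1 → ‖q r * ψ r‖ ≤ C * M := by
    intro r h0 h1
    rw [norm_mul]
    refine mul_le_mul ?_ (hM r h0 h1) (norm_nonneg _) hC0
    simp only [hq_def]
    refine (norm_sub_le _ _).trans ?_
    refine le_trans (add_le_add ((norm_sub_le _ _)) le_rfl) ?_
    have e1 : ‖((ℓ*(ℓ+1):ℕ):ℂ)‖ = ((ℓ*(ℓ+1):ℕ):ℝ) := Complex.norm_natCast _
    have e2 : ‖2*(γ:ℂ)*(r:ℂ)‖ = 2*γ*r := by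
      simp [norm_mul, abs_of_pos hγ, abs_of_pos h0]
    have e3 : ‖lam*(r:ℂ)^2‖ = ‖lam‖*r^2 := by
      rw [norm_mul, norm_pow, Complex.norm_real, Real.norm_eq_abs, sq_abs]
    rw [e1, e2, e3, hC_def]
    have p1 : 2*γ*r ≤ 2*γ := by nlinarith
    have hrr : r^2 ≤ 1 := by nlinarith
    have p2 : ‖lam‖*r^2 ≤ ‖lam‖ := by
      calc ‖lam‖*r^2 ≤ ‖lam‖*1 := mul_le_mul_of_nonneg_left hrr (norm_nonneg lam)
        _ = ‖lam‖ := mul_one _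
    linarith
  have hulip : ∀ x ∈ Set.Ioo (0:ℝ) 1, ∀ y ∈ Set.Ioo (0:ℝ) 1, ‖u y - u x‖ ≤ C*M*‖y - x‖ := by
    intro x hx y hy
    exact Convex.norm_image_sub_le_of_norm_hasDerivWithin_le
      (fun t ht => ((hud t ht.1).hasDerivWithinAt))
      (fun t ht => hqb t ht.1 ht.2) (convex_Ioo 0 1) hx hy
  -- limit L of u at 0
  set xseq : ℕ → ℝ := fun n => 1/(n+2 : ℝ) with hx_def
  have hxmem : ∀ n, xseq n ∈ Set.Ioo (0:ℝ) 1 := by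
    intro n
    constructor
    · positivity
    · rw [hx_def, div_lt_one (by positivity)]
      have : (0:ℝ) ≤ (n:ℝ) := Nat.cast_nonneg n
      linarith
  have hxto : Filter.Tendsto xseq Filter.atTop (nhds 0) := by
    simp only [hx_def, one_div]
    exact Filter.Tendsto.comp tendsto_inv_atTop_zero
      (Filter.tendsto_atTop_add_const_right _ 2 tendsto_natCast_atTop_atTop)
  have hcauchy : CauchySeq (fun n => u (xseq n)) := by
    refine cauchySeq_of_le_tendsto_0 (fun n => C*M*(2/(n+2:ℝ))) ?_ ?_
    · intro n m N hn hm
      rw [dist_eq_norm]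
      refine (hulip _ (hxmem m) _ (hxmem n)).trans ?_
      refine mul_le_mul_of_nonneg_left ?_ (by positivity)
      have h1 : xseq n ≤ 1/(N+2:ℝ) := by
        rw [hx_def]
        refine div_le_div_of_nonneg_left (by norm_num) (by positivity) ?_
        have : (N:ℝ) ≤ n := Nat.cast_le.mpr hn
        linarith
      have h2 : xseq m ≤ 1/(N+2:ℝ) := by
        rw [hx_def]
        refine div_le_div_of_nonneg_left (by norm_num) (by positivity) ?_
        have : (N:ℝ) ≤ m := Nat.cast_le.mpr hm
        linarith
      have h3 : 0 < xseq n := (hxmem n).1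
      have h4 : 0 < xseq m := (hxmem m).1
      rw [Real.norm_eq_abs, abs_sub_le_iff]
      constructor <;> [skip; skip] <;>
        · have : 2/(N+2:ℝ) = 1/(N+2:ℝ) + 1/(N+2:ℝ) := by ring
          rw [this]
          linarith
    · have hinv : Filter.Tendsto (fun n : ℕ => ((n:ℝ)+2)⁻¹) Filter.atTop (nhds 0) :=
        Filter.Tendsto.comp tendsto_inv_atTop_zero
          (Filter.tendsto_atTop_add_const_right _ 2 tendsto_natCast_atTop_atTop)
      have h2 := hinv.const_mul (C*M*2)
      rw [mul_zero] at h2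
      exact h2.congr (fun n => by rw [div_eq_mul_inv]; ring)
  obtain ⟨L, hL⟩ := cauchySeq_tendsto_of_complete hcauchy
  have hUL : ∀ r : ℝ, 0 < r → r < 1 → ‖u r - L‖ ≤ C*M*r := by
    intro r hr0 hr1
    have t1 : Filter.Tendsto (fun n => ‖u r - u (xseq n)‖) Filter.atTop (nhds ‖u r - L‖) :=
      ((tendsto_const_nhds.sub hL).norm)
    have t2 : Filter.Tendsto (fun n => C*M*‖r - xseq n‖) Filter.atTop (nhds (C*M*r)) := by
      have h := (tendsto_const_nhds (x := r)).sub hxto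
      have := (h.norm).const_mul (C*M)
      simpa [abs_of_pos hr0] using this
    exact le_of_tendsto_of_tendsto' t1 t2
      (fun n => hulip _ (hxmem n) _ ⟨hr0, hr1⟩)
  have hL0 : L = 0 := by
    have key : ∀ a : ℝ, 0 < a → a < 1/2 → ‖L‖ ≤ (2*(C*M) + 4*M) * a := by
      intro a ha ha2
      have h2a : 2*a < 1 := by linarith
      set φ : ℝ → ℂ := fun r => ψ r + L / (r:ℂ) with hφ_def
      have hφd : ∀ r : ℝ, 0 < r → HasDerivAt φ (ψ' r - L / (r:ℂ)^2) r := by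
        intro r hr
        have hne : (r:ℂ) ≠ 0 := by exact_mod_cast hr.ne'
        have h1 : HasDerivAt (fun z : ℂ => L / z) (-(L / (r:ℂ)^2)) (r:ℂ) := by
          have := (hasDerivAt_inv hne).const_mul L
          simpa [div_eq_mul_inv, sq, mul_comm, mul_assoc, neg_mul, mul_neg] using this
        have h2 := (hψ1 r hr).add h1.comp_ofReal
        convert h2 using 1
        · rfl
        · rfl
        · exact sub_eq_add_neg _ _
      have hbound : ∀ r ∈ Set.Icc a (2*a), ‖ψ' r - L/(r:ℂ)^2‖ ≤ C*M/a := by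
        intro r hrm
        have hr0 : 0 < r := lt_of_lt_of_le ha hrm.1
        have hr1 : r < 1 := lt_of_le_of_lt hrm.2 h2a
        have hrne : (r:ℂ) ≠ 0 := by exact_mod_cast hr0.ne'
        have e1 : ψ' r - L/(r:ℂ)^2 = (u r - L)/(r:ℂ)^2 := by
          simp only [hu_def]
          field_simp
        rw [e1, norm_div]
        have e2 : ‖((r:ℝ):ℂ)^2‖ = r^2 := by
          rw [norm_pow, Complex.norm_real, Real.norm_eq_abs, sq_abs]
        rw [e2]
        have h3 : ‖u r - L‖/r^2 ≤ (C*M*r)/r^2 :=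
          (div_le_div_iff_of_pos_right (by positivity)).mpr (hUL r hr0 hr1)
        refine h3.trans ?_
        have e3 : (C*M*r)/r^2 = C*M/r := by
          field_simp
        rw [e3]
        exact div_le_div_of_nonneg_left (by positivity) ha hrm.1
      have hmv := Convex.norm_image_sub_le_of_norm_hasDerivWithin_le
        (f' := fun r => ψ' r - L/(r:ℂ)^2)
        (fun t ht => (hφd t (lt_of_lt_of_le ha ht.1)).hasDerivWithinAt)
        hbound (convex_Icc a (2*a)) (Set.left_mem_Icc.mpr (by linarith))
        (Set.right_mem_Icc.mpr (by linarith))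
      have hane : ((a:ℝ):ℂ) ≠ 0 := by exact_mod_cast ha.ne'
      have h2ane : (((2*a:ℝ)):ℂ) ≠ 0 := by
        exact_mod_cast (by linarith : (0:ℝ) < 2*a).ne'
      have e5 : L/(((2*a:ℝ)):ℂ) = (ψ (2*a) - ψ a) - (φ (2*a) - φ a) := by
        simp only [hφ_def]
        push_cast
        field_simp
        ring
      have hnorm : ‖L/(((2*a:ℝ)):ℂ)‖ = ‖L‖/(2*a) := by
        rw [norm_div, Complex.norm_real, Real.norm_eq_abs, abs_of_pos (by linarith)]
      have h6 : ‖L‖/(2*a) ≤ 2*M + C*M := by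
        rw [← hnorm, e5]
        refine (norm_sub_le _ _).trans ?_
        have b1 : ‖ψ (2*a) - ψ a‖ ≤ 2*M := by
          refine (norm_sub_le _ _).trans ?_
          have := hM (2*a) (by linarith) h2a
          have := hM a ha (by linarith)
          linarith
        have b2 : ‖φ (2*a) - φ a‖ ≤ C*M := by
          refine hmv.trans ?_
          have e6 : ‖2*a - a‖ = a := by
            rw [Real.norm_eq_abs, abs_of_pos (by linarith : (0:ℝ) < 2*a - a)]
            ring
          rw [e6]
          rw [div_mul_cancel₀]
          exact ha.ne'
        linarith
      rw [div_le_iff₀ (by linarith : (0:ℝ) < 2*a)] at h6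
      nlinarith
    by_contra hLne
    have hLpos : 0 < ‖L‖ := norm_pos_iff.mpr hLne
    set S : ℝ := 2*(C*M) + 4*M with hS
    have hS0 : 0 ≤ S := by positivity
    set a : ℝ := min (1/4) (‖L‖/(2*(S+1))) with haa
    have hap : 0 < a := lt_min (by norm_num) (by positivity)
    have ha2 : a < 1/2 := lt_of_le_of_lt (min_le_left _ _) (by norm_num)
    have hk := key a hap ha2
    have haL : a ≤ ‖L‖/(2*(S+1)) := min_le_right _ _
    have h2 : ‖L‖ ≤ S * (‖L‖/(2*(S+1))) :=
      hk.trans (mul_le_mul_of_nonneg_left haL hS0)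
    have hpos : (0:ℝ) < 2*(S+1) := by linarith
    rw [← mul_div_assoc, le_div_iff₀ hpos] at h2
    nlinarith
  have hu0 : ∀ r : ℝ, 0 < r → r < 1 → ‖u r‖ ≤ C*M*r := by
    intro r h0 h1
    have := hUL r h0 h1
    rwa [hL0, sub_zero] at this
  have hFc : ContinuousOn (fun r : ℝ => F r) (Set.Icc (0:ℝ) 1) :=
    ((hF.continuous).comp Complex.continuous_ofReal).continuousOn
  obtain ⟨K1, hK1⟩ := (isCompact_Icc).exists_bound_of_continuousOn hFc
  have hFc' : ContinuousOn (fun r : ℝ => deriv F r) (Set.Icc (0:ℝ) 1) :=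
    ((hFd.continuous).comp Complex.continuous_ofReal).continuousOn
  obtain ⟨K2, hK2⟩ := (isCompact_Icc).exists_bound_of_continuousOn hFc'
  have hK1p : 0 ≤ K1 := le_trans (norm_nonneg _) (hK1 0 ⟨le_rfl, by norm_num⟩)
  have hK2p : 0 ≤ K2 := le_trans (norm_nonneg _) (hK2 0 ⟨le_rfl, by norm_num⟩)
  set S₂ : ℝ := M*K2 + C*M*K1 with hS2
  have hS2p : 0 ≤ S₂ := by positivity
  have hW0 : ∀ r : ℝ, 0 < r → W r = 0 := by
    intro r hr
    have hWs : ∀ s : ℝ, 0 < s → s < min r 1 → ‖W r‖ ≤ S₂ * s := by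
      intro s hs hs1
      have hsr : s ≤ r := le_of_lt (lt_of_lt_of_le hs1 (min_le_left _ _))
      have hs2 : s < 1 := lt_of_lt_of_le hs1 (min_le_right _ _)
      rw [hWc r s hs hsr]
      have e : W s = (s:ℂ)^2 * ψ s * deriv F s - u s * F s := by
        simp only [hW_def, hu_def]
        ring
      rw [e]
      refine (norm_sub_le _ _).trans ?_
      have e2 : ‖((s:ℝ):ℂ)^2‖ = s^2 := by
        rw [norm_pow, Complex.norm_real, Real.norm_eq_abs, sq_abs]
      have b1 : ‖(s:ℂ)^2 * ψ s * deriv F s‖ ≤ s^2*M*K2 := by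
        rw [norm_mul, norm_mul, e2]
        have m1 := hM s hs hs2
        have m2 := hK2 s ⟨hs.le, hs2.le⟩
        have n1 : (0:ℝ) ≤ ‖ψ s‖ := norm_nonneg _
        have n2 : (0:ℝ) ≤ ‖deriv F (s:ℂ)‖ := norm_nonneg _
        exact mul_le_mul (mul_le_mul_of_nonneg_left m1 (sq_nonneg s)) m2 n2 (by positivity)
      have b2 : ‖u s * F s‖ ≤ (C*M*s)*K1 := by
        rw [norm_mul]
        exact mul_le_mul (hu0 s hs hs2) (hK1 s ⟨hs.le, hs2.le⟩) (norm_nonneg _)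
          (by positivity)
      have hss : s^2 ≤ s := by nlinarith
      have q1 : s^2*(M*K2) ≤ s*(M*K2) :=
        mul_le_mul_of_nonneg_right hss (mul_nonneg hMpos hK2p)
      calc ‖(s:ℂ)^2 * ψ s * deriv F s‖ + ‖u s * F s‖
          ≤ s^2*M*K2 + (C*M*s)*K1 := add_le_add b1 b2
        _ ≤ s*(M*K2) + (C*M*s)*K1 := by nlinarith [q1]
        _ = S₂ * s := by rw [hS2]; ring
    by_contra hWne
    have hWp : 0 < ‖W r‖ := norm_pos_iff.mpr hWne
    have hmin : 0 < min r 1 := lt_min hr one_pos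
    set s : ℝ := min (min r 1 / 2) (‖W r‖/(2*(S₂+1))) with hs_def
    have hsp : 0 < s := lt_min (by positivity) (by positivity)
    have hslt : s < min r 1 := lt_of_le_of_lt (min_le_left _ _) (by linarith)
    have h := hWs s hsp hslt
    have hsle : s ≤ ‖W r‖/(2*(S₂+1)) := min_le_right _ _
    have h2 : ‖W r‖ ≤ S₂ * (‖W r‖/(2*(S₂+1))) :=
      h.trans (mul_le_mul_of_nonneg_left hsle hS2p)
    have hpos : (0:ℝ) < 2*(S₂+1) := by linarith
    rw [← mul_div_assoc, le_div_iff₀ hpos] at h2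
    nlinarith
  -- there is a point where F does not vanish
  have hex : ∃ r₀ : ℝ, 0 < r₀ ∧ F (r₀:ℂ) ≠ 0 := by
    by_contra hcon
    push_neg at hcon
    have hfreq : ∃ᶠ z in nhdsWithin (1:ℂ) {(1:ℂ)}ᶜ, F z = 0 := by
      have hto : Filter.Tendsto (fun n : ℕ => ((1 + ((n:ℝ)+2)⁻¹ : ℝ) : ℂ)) Filter.atTop
          (nhdsWithin (1:ℂ) {(1:ℂ)}ᶜ) := by
        refine tendsto_nhdsWithin_of_tendsto_nhds_of_eventually_within _ ?_ ?_
        · have hre : Filter.Tendsto (fun n : ℕ => (1 + ((n:ℝ)+2)⁻¹ : ℝ)) Filter.atTop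
              (nhds 1) := by
            have hinv : Filter.Tendsto (fun n : ℕ => ((n:ℝ)+2)⁻¹) Filter.atTop (nhds 0) :=
              Filter.Tendsto.comp tendsto_inv_atTop_zero
                (Filter.tendsto_atTop_add_const_right _ 2 tendsto_natCast_atTop_atTop)
            simpa using (tendsto_const_nhds (x := (1:ℝ))).add hinv
          have := (Complex.continuous_ofReal.tendsto (1:ℝ)).comp hre
          simpa [Function.comp_def] using this
        · refine Filter.Eventually.of_forall fun n => ?_
          simp only [Set.mem_compl_iff, Set.mem_singleton_iff]
          intro hcontra
          have : (1 + ((n:ℝ)+2)⁻¹ : ℝ) = 1 := by exact_mod_cast hcontra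
          have hp : (0:ℝ) < ((n:ℝ)+2)⁻¹ := by positivity
          linarith
      refine hto.frequently (Filter.Frequently.of_forall fun n => ?_)
      exact hcon _ (by positivity)
    have hzero : Set.EqOn F 0 Set.univ :=
      hFa.eqOn_zero_of_preconnected_of_frequently_eq_zero isPreconnected_univ
        (Set.mem_univ (1:ℂ)) hfreq
    have hFzero : F = fun _ => (0:ℂ) := funext fun z => hzero (Set.mem_univ z)
    rw [hFzero] at hFl
    rw [iteratedDeriv_zero_fun] at hFl
    have : ((Nat.factorial ℓ : ℕ) : ℂ) ≠ 0 :=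
      Nat.cast_ne_zero.mpr (Nat.factorial_ne_zero ℓ)
    exact this hFl.symm
  obtain ⟨r₀, hr₀p, hFr₀⟩ := hex
  set c : ℂ := ψ r₀ / F (r₀:ℂ) with hc_def
  have hr₀ne : ((r₀:ℝ):ℂ) ≠ 0 := by exact_mod_cast hr₀p.ne'
  have hc0 : ψ r₀ = c * F (r₀:ℂ) := by
    rw [hc_def]
    field_simp
  have hWr₀ := hW0 r₀ hr₀p
  have h2 : ψ r₀ * deriv F (r₀:ℂ) - ψ' r₀ * F (r₀:ℂ) = 0 := by
    simp only [hW_def] at hWr₀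
    rcases mul_eq_zero.mp hWr₀ with h | h
    · exact absurd h (pow_ne_zero 2 hr₀ne)
    · exact h
  have hc1 : ψ' r₀ = c * deriv F (r₀:ℂ) := by
    rw [hc_def]
    field_simp
    linear_combination -h2
  refine ⟨c, ?_⟩
  intro r hr
  exact ode_unique γ hγ lam ℓ ψ (fun s : ℝ => c * F s) ψ' (fun s : ℝ => c * deriv F s)
    ψ'' (fun s : ℝ => c * deriv (deriv F) s)
    hψ1 hψ2 hψeq
    (fun s _ => (hFr s).const_mul c)
    (fun s _ => (hFr' s).const_mul c)
    (fun s _ => by linear_combination c * hFeq (s:ℂ))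
    r₀ hr₀p hc0 hc1 r hr
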